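/- For all nonnegative reals x₁, x₂, x₃, if (x₁+x₂+x₃)⁴ - 12(x₁²x₂² + x₁²x₃² + x₂²x₃²) - 12x₁x₂x₃(2x₁ + x₃) = 0, then x₁ = x₂ = x₃ = 0. -/
import Mathlib


theorem stmt_7 (x₁ x₂ x₃ : ℝ) (h₁ : 0 ≤ x₁) (h₂ : 0 ≤ x₂) (h₃ : 0 ≤ x₃)
    (h : (x₁+x₂+x₃)^4 - 12*(x₁^2*x₂^2 + x₁^2*x₃^2 + x₂^2*x₃^2)
        - 12*x₁*x₂*x₃*(2*x₁ + x₃) = 0) :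
    x₁ = 0 ∧ x₂ = 0 ∧ x₃ = 0 := by
  have hs : (x₁+x₂+x₃)^4 ≤ 0 := by
    nlinarith [mul_nonneg (mul_nonneg h₁ h₃) (sq_nonneg (2*x₂-2*x₃)),
      sq_nonneg (x₁^2-x₁*x₂+x₁*x₃+x₂^2-x₂*x₃-x₃^2),
      mul_nonneg (mul_nonneg h₂ h₃) (sq_nonneg (2*x₂-2*x₃)),
      sq_nonneg (x₁^2+x₁*x₂-x₁*x₃+x₂^2+x₂*x₃-x₃^2),
      sq_nonneg (x₁^2-x₁*x₂+x₁*x₃-x₂^2-x₂*x₃-x₃^2),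
      mul_nonneg (mul_nonneg h₁ h₂) (sq_nonneg (2*x₁-2*x₂-x₃)),
      mul_nonneg (mul_nonneg h₂ h₂) (sq_nonneg (2*x₂-x₃)),
      mul_nonneg (mul_nonneg h₁ h₃) (sq_nonneg (2*x₁-2*x₂-x₃)),
      mul_nonneg (mul_nonneg h₃ h₃) (sq_nonneg (2*x₂-2*x₃)),
      sq_nonneg (x₁^2+x₁*x₂-x₁*x₃+x₂^2-x₂*x₃-x₃^2),
      mul_nonneg (mul_nonneg h₁ h₃) (sq_nonneg (x₁+2*x₂-2*x₃)),
      mul_nonneg (mul_nonneg h₁ h₂) (sq_nonneg (2*x₁-2*x₂-2*x₃)),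
      sq_nonneg (x₁^2+x₁*x₂-x₁*x₃-x₂^2+x₂*x₃-x₃^2),
      mul_nonneg (mul_nonneg h₁ h₁) (sq_nonneg (2*x₁-2*x₂-x₃)),
      mul_nonneg (mul_nonneg h₁ h₃) (sq_nonneg (2*x₁+x₂-2*x₃))]
  have h0 : (0:ℝ) ≤ x₁ + x₂ + x₃ := by linarith
  have h4 : (x₁+x₂+x₃)^4 = 0 := le_antisymm hs (pow_nonneg h0 4)
  have hz : x₁ + x₂ + x₃ = 0 := by
    have := pow_eq_zero_iff (n := 4) (by norm_num) |>.mp h4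
    exact this
  exact ⟨by linarith, by linarith, by linarith⟩
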